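/- (Centering transformation for the partitioned supervised Laplacian eigenmap constraints.) Let p be a real number, let X be a real (m+n)×k matrix satisfying 𝟙ᵀ X = 0 (each column of X sums to zero) and Xᵀ X = p I_k, and partition X into its first m rows X_l ∈ ℝ^{m×k} and its last n rows X_U ∈ ℝ^{n×k}. Let r = X_lᵀ 𝟙_m ∈ ℝ^k (the vector of column sums of X_l) and define X̃_U = X_U + (1/n) 𝟙_n rᵀ, where 𝟙_n ∈ ℝⁿ is the all-ones vector. Then 𝟙_nᵀ X̃_U = 0 and X̃_Uᵀ X̃_U = p I_k − X_lᵀ X_l − (1/n) r rᵀ. -/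

import Mathlib

open Matrix

/-- (Centering transformation for the partitioned supervised Laplacian eigenmap
constraints.) If `X ∈ ℝ^{(m+n)×k}` satisfies `𝟙ᵀ X = 0` and `Xᵀ X = p I_k`, with top
block `X_l` (first `m` rows) and bottom block `X_U` (last `n` rows),
`r = X_lᵀ 𝟙_m`, and `X̃_U = X_U + (1/n) 𝟙_n rᵀ`, then `𝟙_nᵀ X̃_U = 0` and
`X̃_Uᵀ X̃_U = p I_k − X_lᵀ X_l − (1/n) r rᵀ`. -/
theorem stmt_15 {m n k : ℕ} (hn : 0 < n) (p : ℝ)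
    (X : Matrix (Fin (m + n)) (Fin k) ℝ)
    (hsum : ∀ j, ∑ i, X i j = 0)
    (hXX : Xᵀ * X = p • (1 : Matrix (Fin k) (Fin k) ℝ))
    (Xl : Matrix (Fin m) (Fin k) ℝ) (hXl : Xl = X.submatrix (Fin.castAdd n) id)
    (XU : Matrix (Fin n) (Fin k) ℝ) (hXU : XU = X.submatrix (Fin.natAdd m) id)
    (r : Fin k → ℝ) (hr : ∀ j, r j = ∑ i, Xl i j)
    (Xt : Matrix (Fin n) (Fin k) ℝ)
    (hXt : Xt = XU + (n : ℝ)⁻¹ • Matrix.vecMulVec (fun _ => (1 : ℝ)) r) :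
    (∀ j, ∑ i, Xt i j = 0) ∧
    Xtᵀ * Xt = p • (1 : Matrix (Fin k) (Fin k) ℝ) - Xlᵀ * Xl -
      (n : ℝ)⁻¹ • Matrix.vecMulVec r r := by
  have hnR : (n : ℝ) ≠ 0 := Nat.cast_ne_zero.mpr hn.ne'
  have hU : ∀ j, ∑ i, XU i j = -(r j) := by
    intro j
    have h := hsum j
    rw [Fin.sum_univ_add] at h
    have hrj : r j = ∑ i : Fin m, X (Fin.castAdd n i) j := by
      simp [hr, hXl]
    simp only [hXU, Matrix.submatrix_apply, id]
    linarith
  constructor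
  · intro j
    simp only [hXt, Matrix.add_apply, Matrix.smul_apply, Matrix.vecMulVec_apply,
      one_mul, smul_eq_mul, Finset.sum_add_distrib, hU j, Finset.sum_const,
      Finset.card_univ, Fintype.card_fin, nsmul_eq_mul]
    field_simp
    ring
  · have hsplit : Xlᵀ * Xl + XUᵀ * XU = p • (1 : Matrix (Fin k) (Fin k) ℝ) := by
      rw [← hXX]
      ext a b
      simp only [Matrix.add_apply, Matrix.mul_apply, Matrix.transpose_apply, hXl, hXU,
        Matrix.submatrix_apply, id]
      rw [Fin.sum_univ_add]
    ext a b
    simp only [hXt, Matrix.mul_apply, Matrix.transpose_apply, Matrix.add_apply,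
      Matrix.smul_apply, Matrix.vecMulVec_apply, one_mul, smul_eq_mul,
      Matrix.sub_apply]
    have expand : ∀ i : Fin n, (XU i a + (n:ℝ)⁻¹ * r a) * (XU i b + (n:ℝ)⁻¹ * r b)
        = XU i a * XU i b + (n:ℝ)⁻¹ * r a * XU i b + XU i a * ((n:ℝ)⁻¹ * r b)
          + (n:ℝ)⁻¹ * r a * ((n:ℝ)⁻¹ * r b) := by intro i; ring
    rw [Finset.sum_congr rfl (fun i _ => expand i)]
    simp only [Finset.sum_add_distrib, ← Finset.mul_sum, ← Finset.sum_mul, hU,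
      Finset.sum_const, Finset.card_univ, Fintype.card_fin, nsmul_eq_mul]
    have h1 : ∑ i, XU i a * XU i b = p * (1 : Matrix (Fin k) (Fin k) ℝ) a b - ∑ x, Xl x a * Xl x b := by
      have h2 := congrFun (congrFun hsplit a) b
      simp only [Matrix.add_apply, Matrix.mul_apply, Matrix.transpose_apply,
        Matrix.smul_apply, smul_eq_mul] at h2
      linarith
    rw [h1]
    field_simp
    ring
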